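/- arXiv:2507.10555 — 4 statements merged into one kernel-verified Lean document; each statement's English description precedes it below -/
import Mathlib

section
/- Let P(x) be a monic polynomial of degree d with non-negative coefficients and P(0) = 1, and let P*(x) := x^d·P(1/x) be the polynomial with reversed coefficients. Then for all x > 0, L̃_P(x) + L̃_{P*}(1/x) = lim_{t→∞} L̃_P(t), where L̃_P denotes the Rogers dilogarithm of higher degree associated to P. -/
open Real intervalIntegral

/-- The Rogers dilogarithm of higher degree associated to a function `P`. -/
noncomputable def LP (P : ℝ → ℝ) (x : ℝ) : ℝ :=
  (∫ y in (0:ℝ)..x, Real.log (P y) / y) - (1/2) * Real.log x * Real.log (P x)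

section Aux

open Set Polynomial Filter Topology MeasureTheory

/-- eval of a polynomial with nonneg coefficients at a nonneg point is nonneg. -/
lemma aux_eval_nonneg (S : Polynomial ℝ) (h : ∀ i, 0 ≤ S.coeff i) {y : ℝ} (hy : 0 ≤ y) :
    0 ≤ S.eval y := by
  rw [Polynomial.eval_eq_sum_range]
  exact Finset.sum_nonneg fun i _ => mul_nonneg (h i) (pow_nonneg hy i)

lemma aux_eval_mono (S : Polynomial ℝ) (h : ∀ i, 0 ≤ S.coeff i) {a b : ℝ} (ha : 0 ≤ a)
    (hab : a ≤ b) : S.eval a ≤ S.eval b := by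
  rw [Polynomial.eval_eq_sum_range, Polynomial.eval_eq_sum_range]
  exact Finset.sum_le_sum fun i _ =>
    mul_le_mul_of_nonneg_left (pow_le_pow_left₀ ha hab i) (h i)

/-- decomposition S(y) = y * Q(y) + 1 -/
lemma aux_eval_divX (S : Polynomial ℝ) (h0 : S.coeff 0 = 1) (y : ℝ) :
    S.eval y = y * S.divX.eval y + 1 := by
  conv_lhs => rw [← Polynomial.X_mul_divX_add S]
  simp [h0]

lemma aux_divX_coeff_nonneg (S : Polynomial ℝ) (h : ∀ i, 0 ≤ S.coeff i) (i : ℕ) :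
    0 ≤ S.divX.coeff i := by
  rw [Polynomial.coeff_divX]; exact h _

lemma aux_one_le_eval (S : Polynomial ℝ) (h : ∀ i, 0 ≤ S.coeff i) (h0 : S.coeff 0 = 1)
    {y : ℝ} (hy : 0 ≤ y) : 1 ≤ S.eval y := by
  rw [aux_eval_divX S h0 y]
  nlinarith [aux_eval_nonneg S.divX (aux_divX_coeff_nonneg S h) hy]

/-- bound: 0 ≤ log (S y) ≤ y * Q(x) for 0 ≤ y ≤ x -/
lemma aux_log_bound (S : Polynomial ℝ) (h : ∀ i, 0 ≤ S.coeff i) (h0 : S.coeff 0 = 1)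
    {y x : ℝ} (hy : 0 ≤ y) (hyx : y ≤ x) :
    0 ≤ Real.log (S.eval y) ∧ Real.log (S.eval y) ≤ y * S.divX.eval x := by
  have hQ := aux_divX_coeff_nonneg S h
  have h1 : 1 ≤ S.eval y := aux_one_le_eval S h h0 hy
  constructor
  · exact Real.log_nonneg h1
  · calc Real.log (S.eval y) ≤ S.eval y - 1 :=
          Real.log_le_sub_one_of_pos (by linarith)
      _ = y * S.divX.eval y := by rw [aux_eval_divX S h0 y]; ring
      _ ≤ y * S.divX.eval x :=
          mul_le_mul_of_nonneg_left (aux_eval_mono _ hQ hy hyx) hy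

/-- integrability of log(S y)/y on [0,x] -/
lemma aux_intervalIntegrable (S : Polynomial ℝ) (h : ∀ i, 0 ≤ S.coeff i) (h0 : S.coeff 0 = 1)
    {x : ℝ} (hx : 0 < x) :
    IntervalIntegrable (fun y => Real.log (S.eval y) / y) MeasureTheory.volume 0 x := by
  rw [intervalIntegrable_iff_integrableOn_Ioc_of_le hx.le]
  apply MeasureTheory.Measure.integrableOn_of_bounded (M := S.divX.eval x)
  · exact measure_Ioc_lt_top.ne
  · apply Measurable.aestronglyMeasurable
    exact (Real.measurable_log.comp (S.continuous_aeval.measurable)).div measurable_id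
  · rw [MeasureTheory.ae_restrict_iff' measurableSet_Ioc]
    refine MeasureTheory.ae_of_all _ fun y hy => ?_
    obtain ⟨hb, hl⟩ := aux_log_bound S h h0 hy.1.le hy.2
    rw [Real.norm_eq_abs, abs_div, abs_of_nonneg hb, abs_of_pos hy.1, div_le_iff₀ hy.1]
    linarith [hl]


lemma aux_reverse_eval (P : Polynomial ℝ) {y : ℝ} (hy : y ≠ 0) :
    y ^ P.natDegree * P.eval y⁻¹ = P.reverse.eval y := by
  letI : Invertible (y⁻¹ : ℝ) := invertibleOfNonzero (inv_ne_zero hy)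
  have h := Polynomial.eval₂_reverse_mul_pow (RingHom.id ℝ) y⁻¹ P
  rw [invOf_eq_inv, inv_inv] at h
  rw [Polynomial.eval₂_eq_eval_map, Polynomial.eval₂_eq_eval_map, Polynomial.map_id,
    Polynomial.map_id] at h
  rw [← h, inv_pow]
  field_simp

lemma aux_reverse_coeff_nonneg (P : Polynomial ℝ) (h : ∀ i, 0 ≤ P.coeff i) (i : ℕ) :
    0 ≤ P.reverse.coeff i := by rw [Polynomial.coeff_reverse]; exact h _

lemma aux_reverse_coeff_zero (P : Polynomial ℝ) (hP : P.Monic) : P.reverse.coeff 0 = 1 := by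
  rw [Polynomial.coeff_zero_reverse]; exact hP

/-- the integrand of LP for P* coincides with the one for reverse P on [0, s] -/
lemma aux_integrand_congr (d : ℕ) (P : Polynomial ℝ) (hdeg : P.natDegree = d) (y : ℝ) :
    Real.log (y ^ d * P.eval y⁻¹) / y = Real.log (P.reverse.eval y) / y := by
  rcases eq_or_ne y 0 with rfl | hy
  · simp
  · rw [← hdeg, aux_reverse_eval P hy]

lemma aux_LP_star_eq (d : ℕ) (P : Polynomial ℝ) (hdeg : P.natDegree = d) {s : ℝ}
    (hs : s ≠ 0) :
    LP (fun u => u ^ d * P.eval u⁻¹) s = LP (fun u => P.reverse.eval u) s := by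
  unfold LP
  rw [intervalIntegral.integral_congr (fun y _ => aux_integrand_congr d P hdeg y)]
  simp only [← hdeg, aux_reverse_eval P hs]

lemma aux_tendsto_zero (d : ℕ) (P : Polynomial ℝ) (hP : P.Monic)
    (hdeg : P.natDegree = d) (hcoeff : ∀ i, 0 ≤ P.coeff i) :
    Tendsto (fun s => LP (fun u => u ^ d * P.eval u⁻¹) s) (𝓝[>] (0:ℝ)) (𝓝 0) := by
  set R := P.reverse with hR
  have hRc : ∀ i, 0 ≤ R.coeff i := aux_reverse_coeff_nonneg P hcoeff
  have hR0 : R.coeff 0 = 1 := aux_reverse_coeff_zero P hP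
  set Q := R.divX with hQdef
  have hQc : ∀ i, 0 ≤ Q.coeff i := by
    intro i; rw [hQdef, Polynomial.coeff_divX]; exact hRc _
  apply squeeze_zero_norm'
    (a := fun s => (s + |s * Real.log s|) * Q.eval s)
  · filter_upwards [self_mem_nhdsWithin] with s hs
    have hs0 : (0:ℝ) < s := hs
    rw [aux_LP_star_eq d P hdeg hs0.ne']
    have hQs : 0 ≤ Q.eval s := aux_eval_nonneg Q hQc hs0.le
    -- integral bounds
    have hibound : ∀ y ∈ Icc (0:ℝ) s, Real.log (R.eval y) / y ≤ Q.eval s := by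
      intro y hy
      rcases eq_or_lt_of_le hy.1 with rfl | hy0
      · simpa using hQs
      · obtain ⟨_, hl⟩ := aux_log_bound R hRc hR0 hy0.le hy.2
        rw [div_le_iff₀ hy0]; nlinarith
    have hinonneg : ∀ y ∈ Icc (0:ℝ) s, 0 ≤ Real.log (R.eval y) / y := by
      intro y hy
      rcases eq_or_lt_of_le hy.1 with rfl | hy0
      · simp
      · exact div_nonneg (aux_log_bound R hRc hR0 hy0.le hy.2).1 hy0.le
    have hInt : IntervalIntegrable (fun y => Real.log (R.eval y) / y) volume 0 s :=
      aux_intervalIntegrable R hRc hR0 hs0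
    have hI1 : (0:ℝ) ≤ ∫ y in (0:ℝ)..s, Real.log (R.eval y) / y :=
      intervalIntegral.integral_nonneg hs0.le hinonneg
    have hI2 : (∫ y in (0:ℝ)..s, Real.log (R.eval y) / y) ≤ s * Q.eval s := by
      have := intervalIntegral.integral_mono_on hs0.le hInt
        (_root_.intervalIntegrable_const) hibound
      simpa using this
    -- second term bound
    have hb2 : |(1/2 : ℝ) * Real.log s * Real.log (R.eval s)| ≤ |s * Real.log s| * Q.eval s := by
      obtain ⟨h1, h2⟩ := aux_log_bound R hRc hR0 hs0.le (le_refl s)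
      rw [abs_mul, abs_mul, abs_of_nonneg h1, abs_mul, abs_of_pos hs0]
      have : |(1/2 : ℝ)| = 1/2 := by norm_num
      rw [this]
      calc 1/2 * |Real.log s| * Real.log (R.eval s)
          ≤ 1 * |Real.log s| * (s * Q.eval s) := by
            apply mul_le_mul _ h2 h1 (by positivity)
            nlinarith [abs_nonneg (Real.log s)]
        _ = s * |Real.log s| * Q.eval s := by ring
    unfold LP
    rw [Real.norm_eq_abs]
    calc |(∫ y in (0:ℝ)..s, Real.log (R.eval y) / y) -
            1/2 * Real.log s * Real.log (R.eval s)|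
        ≤ |∫ y in (0:ℝ)..s, Real.log (R.eval y) / y| +
            |1/2 * Real.log s * Real.log (R.eval s)| := abs_sub _ _
      _ ≤ s * Q.eval s + |s * Real.log s| * Q.eval s := by
          apply add_le_add _ hb2
          rw [abs_of_nonneg hI1]; exact hI2
      _ = (s + |s * Real.log s|) * Q.eval s := by ring
  · have hcont : ContinuousAt (fun s : ℝ => (s + |s * Real.log s|) * Q.eval s) 0 := by
      apply ContinuousAt.mul
      · apply ContinuousAt.add continuousAt_id
        exact (Real.continuous_mul_log.abs).continuousAt
      · exact Q.continuous_aeval.continuousAt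
    have h0 : ((0:ℝ) + |(0:ℝ) * Real.log 0|) * Q.eval 0 = 0 := by simp
    have := hcont.tendsto
    rw [show ((0:ℝ) + |(0:ℝ) * Real.log 0|) * Q.eval 0 = 0 by simp] at this
    exact this.mono_left nhdsWithin_le_nhds

/-- log of reverse eval at inverse point -/
lemma aux_log_R_inv (d : ℕ) (P : Polynomial ℝ) (hdeg : P.natDegree = d)
    (hcoeff : ∀ i, 0 ≤ P.coeff i) (h0 : P.coeff 0 = 1) {x : ℝ} (hx : 0 < x) :
    Real.log (P.reverse.eval x⁻¹) = Real.log (P.eval x) - d * Real.log x := by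
  have h1 : 1 ≤ P.eval x := aux_one_le_eval P hcoeff h0 hx.le
  rw [← aux_reverse_eval P (inv_ne_zero hx.ne'), inv_inv, ← hdeg] at *
  rw [Real.log_mul (by positivity) (by linarith), Real.log_pow, Real.log_inv]
  ring

/-- continuity of the integrand on positive reals -/
lemma aux_cont (S : Polynomial ℝ) (h : ∀ i, 0 ≤ S.coeff i) (h0 : S.coeff 0 = 1) :
    ContinuousOn (fun y => Real.log (S.eval y) / y) (Ioi (0:ℝ)) := by
  apply ContinuousOn.div
  · apply ContinuousOn.log S.continuous.continuousOn
    intro y hy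
    have := aux_one_le_eval S h h0 (le_of_lt hy)
    linarith
  · exact continuousOn_id
  · exact fun y hy => ne_of_gt hy

lemma aux_uIcc_subset {x t : ℝ} (hx : 0 < x) (ht : 0 < t) : uIcc t x ⊆ Ioi (0:ℝ) := by
  intro y hy
  have := hy.1
  simp only [uIcc, Set.mem_Icc] at hy
  exact lt_of_lt_of_le (lt_min ht hx) hy.1

/-- key constancy lemma -/
lemma aux_const (d : ℕ) (P : Polynomial ℝ) (hP : P.Monic) (hdeg : P.natDegree = d)
    (hcoeff : ∀ i, 0 ≤ P.coeff i) (h0 : P.coeff 0 = 1) {x t : ℝ} (hx : 0 < x) (ht : 0 < t) :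
    LP (fun u => P.eval u) x + LP (fun u => u ^ d * P.eval u⁻¹) (1/x)
      = LP (fun u => P.eval u) t + LP (fun u => u ^ d * P.eval u⁻¹) (1/t) := by
  have hRc : ∀ i, 0 ≤ P.reverse.coeff i := aux_reverse_coeff_nonneg P hcoeff
  have hR0 : P.reverse.coeff 0 = 1 := aux_reverse_coeff_zero P hP
  set g : ℝ → ℝ := fun y => Real.log (P.eval y) / y with hg
  set gR : ℝ → ℝ := fun y => Real.log (P.reverse.eval y) / y with hgR
  -- continuity
  have hgc : ContinuousOn g (Ioi (0:ℝ)) := aux_cont P hcoeff h0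
  have hgRc : ContinuousOn gR (Ioi (0:ℝ)) := aux_cont P.reverse hRc hR0
  have hsub : uIcc t x ⊆ Ioi (0:ℝ) := aux_uIcc_subset hx ht
  have hsubinv : uIcc t⁻¹ x⁻¹ ⊆ Ioi (0:ℝ) :=
    aux_uIcc_subset (inv_pos.2 hx) (inv_pos.2 ht)
  -- adjacency for g : 0..t, t..x
  have hgint_tx : IntervalIntegrable g volume t x :=
    (hgc.mono hsub).intervalIntegrable
  have hA : (∫ y in (0:ℝ)..t, g y) + (∫ y in t..x, g y) = ∫ y in (0:ℝ)..x, g y :=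
    intervalIntegral.integral_add_adjacent_intervals
      (aux_intervalIntegrable P hcoeff h0 ht) hgint_tx
  -- adjacency for gR
  have hgRint : IntervalIntegrable gR volume t⁻¹ x⁻¹ :=
    (hgRc.mono hsubinv).intervalIntegrable
  have hB : (∫ y in (0:ℝ)..t⁻¹, gR y) + (∫ y in t⁻¹..x⁻¹, gR y) = ∫ y in (0:ℝ)..x⁻¹, gR y :=
    intervalIntegral.integral_add_adjacent_intervals
      (aux_intervalIntegrable P.reverse hRc hR0 (inv_pos.2 ht)) hgRint
  -- substitution
  have hsubst : (∫ u in t..x, (-(u^2)⁻¹) • gR u⁻¹) = ∫ y in t⁻¹..x⁻¹, gR y := by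
    have := intervalIntegral.integral_comp_smul_deriv' (a := t) (b := x)
      (f := fun u => u⁻¹) (f' := fun u => -(u^2)⁻¹) (g := gR)
      (fun u hu => hasDerivAt_inv (ne_of_gt (hsub hu)))
      (ContinuousOn.neg (ContinuousOn.inv₀ (continuousOn_pow 2)
        (fun u hu => by have h2 : (0:ℝ) < u := hsub hu; positivity)))
      (hgRc.mono ?_)
    · exact this
    · rintro y ⟨u, hu, rfl⟩
      exact Set.mem_Ioi.2 (inv_pos.2 (Set.mem_Ioi.1 (hsub hu)))
  -- pointwise rewriting of the substituted integrand
  have hpt : ∀ u ∈ uIcc t x, (-(u^2)⁻¹) • gR u⁻¹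
      = (d : ℝ) * (Real.log u / u) - g u := by
    intro u hu
    have hu0 : (0:ℝ) < u := hsub hu
    have hlog := aux_log_R_inv d P hdeg hcoeff h0 hu0
    simp only [hgR, hg, smul_eq_mul]
    rw [hlog]
    field_simp
    ring
  -- log integral
  have hlogint : IntervalIntegrable (fun u => Real.log u / u) volume t x := by
    apply ContinuousOn.intervalIntegrable
    apply ContinuousOn.div (Real.continuousOn_log.mono ?_) continuousOn_id
      (fun u hu => ne_of_gt (hsub hu))
    · intro u hu; exact ne_of_gt (hsub hu)
  have hlogval : (∫ u in t..x, Real.log u / u)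
      = Real.log x ^ 2 / 2 - Real.log t ^ 2 / 2 := by
    apply intervalIntegral.integral_eq_sub_of_hasDerivAt
      (f := fun u => Real.log u ^ 2 / 2)
    · intro u hu
      have hu0 : u ≠ 0 := ne_of_gt (hsub hu)
      have h : HasDerivAt (fun u => Real.log u ^ 2 / 2) _ u :=
        ((Real.hasDerivAt_log hu0).pow 2).div_const 2
      refine h.congr_deriv ?_
      rw [show (2:ℕ) - 1 = 1 from rfl, pow_one]
      ring
    · exact hlogint
  -- combine substitution pieces
  have hC : (∫ y in t⁻¹..x⁻¹, gR y)
      = (d : ℝ) * (Real.log x ^ 2 / 2 - Real.log t ^ 2 / 2) - ∫ u in t..x, g u := by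
    rw [← hsubst, intervalIntegral.integral_congr hpt,
      intervalIntegral.integral_sub (hlogint.const_mul _) hgint_tx,
      intervalIntegral.integral_const_mul, hlogval]
  -- final algebra
  rw [aux_LP_star_eq d P hdeg (by positivity : (0:ℝ) < 1/x).ne',
    aux_LP_star_eq d P hdeg (by positivity : (0:ℝ) < 1/t).ne']
  unfold LP
  simp only [one_div]
  rw [aux_log_R_inv d P hdeg hcoeff h0 hx, aux_log_R_inv d P hdeg hcoeff h0 ht,
    Real.log_inv, Real.log_inv]
  have e1 : (∫ y in (0:ℝ)..x, Real.log (P.eval y) / y) = ∫ y in (0:ℝ)..x, g y := rfl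
  rw [e1, ← hA, ← hB, hC]
  ring


theorem aux_main (d : ℕ) (P : Polynomial ℝ) (hP : P.Monic)
    (hdeg : P.natDegree = d) (hcoeff : ∀ i, 0 ≤ P.coeff i) (h0 : P.coeff 0 = 1)
    (Linf : ℝ)
    (hlim : Filter.Tendsto (fun t => LP (fun u => P.eval u) t) Filter.atTop (nhds Linf))
    (x : ℝ) (hx : 0 < x) :
    LP (fun u => P.eval u) x + LP (fun u => u ^ d * P.eval u⁻¹) (1 / x) = Linf := by
  have hinv : Tendsto (fun t : ℝ => 1 / t) atTop (𝓝[>] (0:ℝ)) := by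
    apply tendsto_nhdsWithin_of_tendsto_nhds_of_eventually_within
    · simpa only [one_div] using tendsto_inv_atTop_zero
    · filter_upwards [eventually_gt_atTop (0:ℝ)] with t ht
      simp only [Set.mem_Ioi]; positivity
  have htends : Tendsto (fun t => LP (fun u => P.eval u) t
      + LP (fun u => u ^ d * P.eval u⁻¹) (1 / t)) atTop (𝓝 (Linf + 0)) :=
    hlim.add ((aux_tendsto_zero d P hP hdeg hcoeff).comp hinv)
  have heq : (fun t => LP (fun u => P.eval u) t + LP (fun u => u ^ d * P.eval u⁻¹) (1 / t))
      =ᶠ[atTop] (fun _ => LP (fun u => P.eval u) x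
        + LP (fun u => u ^ d * P.eval u⁻¹) (1 / x)) := by
    filter_upwards [eventually_gt_atTop (0:ℝ)] with t ht
    exact aux_const d P hP hdeg hcoeff h0 ht hx
  have := tendsto_nhds_unique (htends.congr' heq) tendsto_const_nhds
  rw [add_zero] at this
  exact this.symm

end Aux

/-- `L̃_P(x) + L̃_{P*}(1/x) = L̃_P(∞)` where `P*(x) = x^d·P(1/x)`. -/
theorem LP_add_LP_reverse (d : ℕ) (P : Polynomial ℝ) (hP : P.Monic)
    (hdeg : P.natDegree = d) (hcoeff : ∀ i, 0 ≤ P.coeff i) (h0 : P.coeff 0 = 1)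
    (Linf : ℝ)
    (hlim : Filter.Tendsto (fun t => LP (fun u => P.eval u) t) Filter.atTop (nhds Linf))
    (x : ℝ) (hx : 0 < x) :
    LP (fun u => P.eval u) x + LP (fun u => u ^ d * P.eval u⁻¹) (1 / x) = Linf :=
  aux_main d P hP hdeg hcoeff h0 Linf hlim x hx
end

section
/- Let P(x) be a monic polynomial of degree d with non-negative coefficients and P(0)=1, and let P*(x) := x^d·P(1/x). Then lim_{x→∞} L̃_P(x) = lim_{x→∞} L̃_{P*}(x), where L̃_P denotes the Rogers dilogarithm of higher degree. -/
open Real intervalIntegral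

open Polynomial Filter MeasureTheory Set

namespace LPaux

variable {R : Polynomial ℝ}

lemma eval_nonneg (hc : ∀ i, 0 ≤ R.coeff i) {a : ℝ} (ha : 0 ≤ a) : 0 ≤ R.eval a := by
  rw [Polynomial.eval_eq_sum_range]
  exact Finset.sum_nonneg fun i _ => mul_nonneg (hc i) (pow_nonneg ha i)

lemma eval_mono (hc : ∀ i, 0 ≤ R.coeff i) {a b : ℝ} (ha : 0 ≤ a) (hab : a ≤ b) :
    R.eval a ≤ R.eval b := by
  rw [Polynomial.eval_eq_sum_range, Polynomial.eval_eq_sum_range]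
  exact Finset.sum_le_sum fun i _ =>
    mul_le_mul_of_nonneg_left (pow_le_pow_left₀ ha hab i) (hc i)

lemma exists_T (hc : ∀ i, 0 ≤ R.coeff i) (h0 : R.coeff 0 = 1) :
    ∃ T : Polynomial ℝ, (∀ i, 0 ≤ T.coeff i) ∧ ∀ y : ℝ, R.eval y = 1 + y * T.eval y := by
  have hdvd : Polynomial.X ∣ (R - Polynomial.C 1) :=
    Polynomial.X_dvd_iff.2 (by simp [h0])
  obtain ⟨T, hT⟩ := hdvd
  have hR : R = Polynomial.C 1 + Polynomial.X * T := by
    rw [← hT]; ring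
  refine ⟨T, fun i => ?_, fun y => ?_⟩
  · have h1 : R.coeff (i + 1) = T.coeff i := by
      rw [hR]; simp [Polynomial.coeff_X_mul, Polynomial.coeff_one]
    rw [← h1]; exact hc _
  · rw [hR]; simp

lemma one_le_eval (hc : ∀ i, 0 ≤ R.coeff i) (h0 : R.coeff 0 = 1) {y : ℝ} (hy : 0 ≤ y) :
    1 ≤ R.eval y := by
  obtain ⟨T, hcT, hT⟩ := exists_T hc h0
  have := mul_nonneg hy (eval_nonneg hcT hy)
  rw [hT y]; linarith

lemma eval_pos (hc : ∀ i, 0 ≤ R.coeff i) (h0 : R.coeff 0 = 1) {y : ℝ} (hy : 0 ≤ y) :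
    0 < R.eval y := lt_of_lt_of_le one_pos (one_le_eval hc h0 hy)

end LPaux

namespace LPaux
variable {R : Polynomial ℝ}

lemma f_measurable (R : Polynomial ℝ) :
    Measurable fun y : ℝ => Real.log (R.eval y) / y :=
  (Real.measurable_log.comp R.continuous.measurable).div measurable_id

lemma f_nonneg (hc : ∀ i, 0 ≤ R.coeff i) (h0 : R.coeff 0 = 1) {y : ℝ} (hy : 0 ≤ y) :
    0 ≤ Real.log (R.eval y) / y :=
  div_nonneg (Real.log_nonneg (one_le_eval hc h0 hy)) hy

lemma f_le (hc : ∀ i, 0 ≤ R.coeff i) (h0 : R.coeff 0 = 1) {T : Polynomial ℝ}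
    (hcT : ∀ i, 0 ≤ T.coeff i) (hT : ∀ y : ℝ, R.eval y = 1 + y * T.eval y)
    {b y : ℝ} (hy : 0 ≤ y) (hyb : y ≤ b) :
    Real.log (R.eval y) / y ≤ T.eval b := by
  rcases eq_or_lt_of_le hy with h | h
  · rw [← h]
    simp only [div_zero]
    exact eval_nonneg hcT (le_trans hy hyb)
  · rw [div_le_iff₀ h]
    calc Real.log (R.eval y) ≤ R.eval y - 1 :=
          Real.log_le_sub_one_of_pos (eval_pos hc h0 hy)
      _ = y * T.eval y := by rw [hT y]; ring
      _ ≤ T.eval b * y := by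
          rw [mul_comm]
          exact mul_le_mul_of_nonneg_right (eval_mono hcT hy hyb) hy

lemma f_intervalIntegrable (hc : ∀ i, 0 ≤ R.coeff i) (h0 : R.coeff 0 = 1) {b : ℝ}
    (hb : 0 ≤ b) :
    IntervalIntegrable (fun y => Real.log (R.eval y) / y) MeasureTheory.volume 0 b := by
  obtain ⟨T, hcT, hT⟩ := exists_T hc h0
  rw [intervalIntegrable_iff_integrableOn_Ioc_of_le hb]
  refine MeasureTheory.Integrable.mono' (g := fun _ => T.eval b)
    (MeasureTheory.integrableOn_const measure_Ioc_lt_top.ne)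
    ((f_measurable R).aestronglyMeasurable) ?_
  filter_upwards [MeasureTheory.ae_restrict_mem measurableSet_Ioc] with y hy
  rw [Real.norm_eq_abs, abs_of_nonneg (f_nonneg hc h0 hy.1.le)]
  exact f_le hc h0 hcT hT hy.1.le hy.2

lemma tendsto_LP_zero (hc : ∀ i, 0 ≤ R.coeff i) (h0 : R.coeff 0 = 1) :
    Tendsto (fun t => LP (fun u => R.eval u) t) (nhdsWithin 0 (Set.Ioi 0)) (nhds 0) := by
  obtain ⟨T, hcT, hT⟩ := exists_T hc h0
  set M := T.eval 1 with hM
  have hM0 : 0 ≤ M := eval_nonneg hcT zero_le_one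
  have hint : Tendsto (fun t => ∫ y in (0:ℝ)..t, Real.log (R.eval y) / y)
      (nhdsWithin 0 (Set.Ioi 0)) (nhds 0) := by
    apply squeeze_zero' (f := fun t => ∫ y in (0:ℝ)..t, Real.log (R.eval y) / y)
      (g := fun t => M * t)
    · filter_upwards [Ioc_mem_nhdsGT_of_mem (Set.left_mem_Ico.2 one_pos)] with t ht
      exact intervalIntegral.integral_nonneg ht.1.le fun u hu => f_nonneg hc h0 hu.1
    · filter_upwards [Ioc_mem_nhdsGT_of_mem (Set.left_mem_Ico.2 one_pos)] with t ht
      calc (∫ y in (0:ℝ)..t, Real.log (R.eval y) / y) ≤ ∫ _ in (0:ℝ)..t, M := by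
            apply intervalIntegral.integral_mono_on ht.1.le
              (f_intervalIntegrable hc h0 ht.1.le) intervalIntegrable_const
            intro y hy
            exact (f_le hc h0 hcT hT hy.1 hy.2).trans (eval_mono hcT (le_trans hy.1 hy.2) ht.2)
        _ = M * t := by simp [mul_comm]
    · have : Tendsto (fun t : ℝ => M * t) (nhds 0) (nhds (M * 0)) :=
        (continuous_const.mul continuous_id).tendsto 0
      rw [mul_zero] at this
      exact this.mono_left nhdsWithin_le_nhds
  have hlog : Tendsto (fun t => (1/2 : ℝ) * Real.log t * Real.log (R.eval t))
      (nhdsWithin 0 (Set.Ioi 0)) (nhds 0) := by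
    apply squeeze_zero_norm' (a := fun t => |Real.log t * t| * ((1/2) * M))
    · filter_upwards [Ioc_mem_nhdsGT_of_mem (Set.left_mem_Ico.2 one_pos)] with t ht
      have h1 : 0 ≤ Real.log (R.eval t) := Real.log_nonneg (one_le_eval hc h0 ht.1.le)
      have h2 : Real.log (R.eval t) ≤ t * M := by
        calc Real.log (R.eval t) ≤ R.eval t - 1 :=
              Real.log_le_sub_one_of_pos (eval_pos hc h0 ht.1.le)
          _ = t * T.eval t := by rw [hT t]; ring
          _ ≤ t * M := mul_le_mul_of_nonneg_left (eval_mono hcT ht.1.le ht.2) ht.1.le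
      rw [Real.norm_eq_abs, abs_mul, abs_mul, abs_mul]
      rw [abs_of_nonneg h1, abs_of_nonneg ht.1.le]
      have : |Real.log t| * t * ((1:ℝ)/2 * M) = |(1:ℝ)/2| * |Real.log t| * (t * M) := by
        rw [abs_of_nonneg (by norm_num : (0:ℝ) ≤ (1:ℝ)/2)]; ring
      rw [this]
      exact mul_le_mul_of_nonneg_left h2 (by positivity)
    · have h := tendsto_log_mul_rpow_nhdsGT_zero (r := 1) one_pos
      simp only [Real.rpow_one] at h
      have := (h.abs.mul_const ((1/2) * M))
      simpa using this
  have := hint.sub hlog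
  rw [sub_zero] at this
  exact this

lemma hasDerivAt_LP (hc : ∀ i, 0 ≤ R.coeff i) (h0 : R.coeff 0 = 1) {x : ℝ} (hx : 0 < x) :
    HasDerivAt (fun t => LP (fun u => R.eval u) t)
      (Real.log (R.eval x) / x
        - ((1/2) * x⁻¹ * Real.log (R.eval x)
            + (1/2) * Real.log x * ((R.eval x)⁻¹ * R.derivative.eval x))) x := by
  have hpos : 0 < R.eval x := eval_pos hc h0 hx.le
  have hcont : ContinuousAt (fun y => Real.log (R.eval y) / y) x :=
    ((R.continuousAt.log hpos.ne')).div continuousAt_id hx.ne'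
  have h1 : HasDerivAt (fun t => ∫ y in (0:ℝ)..t, Real.log (R.eval y) / y)
      (Real.log (R.eval x) / x) x :=
    intervalIntegral.integral_hasDerivAt_right (f_intervalIntegrable hc h0 hx.le)
      ((f_measurable R).stronglyMeasurable.stronglyMeasurableAtFilter) hcont
  have hlog : HasDerivAt (fun t => Real.log (R.eval t)) ((R.eval x)⁻¹ * R.derivative.eval x) x :=
    by have := (Real.hasDerivAt_log hpos.ne').comp x (R.hasDerivAt x); exact this
  have h2 : HasDerivAt (fun t => (1/2 : ℝ) * Real.log t * Real.log (R.eval t))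
      ((1/2) * x⁻¹ * Real.log (R.eval x)
        + (1/2) * Real.log x * ((R.eval x)⁻¹ * R.derivative.eval x)) x := by
    exact ((Real.hasDerivAt_log hx.ne').const_mul (1/2 : ℝ)).mul hlog
  exact h1.sub h2

lemma eq_of_deriv_zero (f : ℝ → ℝ) (hf : ∀ x : ℝ, 0 < x → HasDerivAt f 0 x)
    {a b : ℝ} (ha : 0 < a) (hb : 0 < b) : f a = f b := by
  rcases le_total a b with hab | hab
  · have := constant_of_has_deriv_right_zero (f := f) (a := a) (b := b)
      (fun z hz => (hf z (lt_of_lt_of_le ha hz.1)).continuousAt.continuousWithinAt)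
      (fun z hz => (hf z (lt_of_lt_of_le ha hz.1)).hasDerivWithinAt)
    exact (this b ⟨hab, le_refl b⟩).symm
  · have := constant_of_has_deriv_right_zero (f := f) (a := b) (b := a)
      (fun z hz => (hf z (lt_of_lt_of_le hb hz.1)).continuousAt.continuousWithinAt)
      (fun z hz => (hf z (lt_of_lt_of_le hb hz.1)).hasDerivWithinAt)
    exact this a ⟨hab, le_refl a⟩

end LPaux

open LPaux in
/-- `lim_{x→∞} L̃_P(x) = lim_{x→∞} L̃_{P*}(x)` where `P*(x) = x^d·P(1/x)`. -/
theorem LP_lim_eq_LP_reverse_lim (d : ℕ) (P : Polynomial ℝ) (hP : P.Monic)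
    (hdeg : P.natDegree = d) (hcoeff : ∀ i, 0 ≤ P.coeff i) (h0 : P.coeff 0 = 1)
    (A B : ℝ)
    (hA : Filter.Tendsto (fun t => LP (fun u => P.eval u) t) Filter.atTop (nhds A))
    (hB : Filter.Tendsto (fun t => LP (fun u => u ^ d * P.eval u⁻¹) t) Filter.atTop (nhds B)) :
    A = B := by
  rcases Nat.eq_zero_or_pos d with hd0 | hdpos
  · -- degenerate case `d = 0`, `P = 1`
    subst hd0
    have hP1 : P = Polynomial.C 1 := by
      rw [← h0]; exact Polynomial.eq_C_of_natDegree_eq_zero hdeg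
    have e1 : ∀ t : ℝ, LP (fun u => P.eval u) t = 0 := by
      intro t; simp [LP, hP1]
    have e2 : ∀ t : ℝ, LP (fun u => u ^ 0 * P.eval u⁻¹) t = 0 := by
      intro t; simp [LP, hP1]
    have hA0 : A = 0 := tendsto_nhds_unique (hA.congr e1) tendsto_const_nhds
    have hB0 : B = 0 := tendsto_nhds_unique (hB.congr e2) tendsto_const_nhds
    rw [hA0, hB0]
  -- main case `0 < d`
  set Q : Polynomial ℝ := P.reverse with hQdef
  have hQc : ∀ i, 0 ≤ Q.coeff i := by
    intro i; rw [hQdef, Polynomial.coeff_reverse]; exact hcoeff _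
  have hQ0 : Q.coeff 0 = 1 := by
    rw [hQdef, Polynomial.coeff_zero_reverse]; exact hP
  have hQeval : ∀ u : ℝ, u ≠ 0 → Q.eval u = u ^ d * P.eval u⁻¹ := by
    intro u hu
    have hui : (u⁻¹ : ℝ) ≠ 0 := inv_ne_zero hu
    letI := invertibleOfNonzero hui
    have h := Polynomial.eval₂_reverse_mul_pow (RingHom.id ℝ) u⁻¹ P
    rw [invOf_eq_inv, inv_inv, hdeg] at h
    have h' : Q.eval u * (u⁻¹) ^ d = P.eval u⁻¹ := h
    rw [← h', inv_pow]
    field_simp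
  have hQeval' : ∀ x : ℝ, x ≠ 0 → P.eval x = x ^ d * Q.eval x⁻¹ := by
    intro x hx
    rw [hQeval x⁻¹ (inv_ne_zero hx), inv_inv, inv_pow]
    field_simp
  have hQderiv : ∀ t : ℝ, 0 < t → Q.derivative.eval t =
      (d : ℝ) * t ^ (d - 1) * P.eval t⁻¹ + t ^ d * (P.derivative.eval t⁻¹ * (-(t ^ 2)⁻¹)) := by
    intro t ht
    have hg : HasDerivAt (fun u : ℝ => u ^ d * P.eval u⁻¹)
        ((d : ℝ) * t ^ (d - 1) * P.eval t⁻¹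
          + t ^ d * (P.derivative.eval t⁻¹ * (-(t ^ 2)⁻¹))) t :=
      (hasDerivAt_pow d t).mul ((P.hasDerivAt t⁻¹).comp t (hasDerivAt_inv ht.ne'))
    have heq : (fun u => Q.eval u) =ᶠ[nhds t] fun u : ℝ => u ^ d * P.eval u⁻¹ := by
      filter_upwards [Ioi_mem_nhds ht] with u hu
      exact hQeval u (ne_of_gt hu)
    exact (Q.hasDerivAt t).unique (hg.congr_of_eventuallyEq heq)
  set F : ℝ → ℝ := fun x => LP (fun u => P.eval u) x + LP (fun u => Q.eval u) x⁻¹ with hFdef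
  have hF : ∀ x : ℝ, 0 < x → HasDerivAt F 0 x := by
    intro x hx
    have hxi : 0 < x⁻¹ := inv_pos.2 hx
    have h1 := hasDerivAt_LP hcoeff h0 hx
    have h2 := (hasDerivAt_LP hQc hQ0 hxi).comp x (hasDerivAt_inv hx.ne')
    have hsum := h1.add h2
    have hp : 0 < P.eval x := eval_pos hcoeff h0 hx.le
    have hq : Q.eval x⁻¹ = (x⁻¹) ^ d * P.eval x := by
      rw [hQeval x⁻¹ (inv_ne_zero hx.ne'), inv_inv]
    have hlq : Real.log (Q.eval x⁻¹) = Real.log (P.eval x) - d * Real.log x := by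
      rw [hq, Real.log_mul (by positivity) hp.ne', Real.log_pow, Real.log_inv]; ring
    have hq' := hQderiv x⁻¹ hxi
    rw [inv_inv] at hq'
    convert hsum using 1
    case e'_4 => rfl
    case e'_5 => rfl
    case e'_8 => rfl
    rw [hq', hlq, hq, Real.log_inv]
    obtain ⟨e, rfl⟩ : ∃ e, d = e + 1 := ⟨d - 1, (Nat.succ_pred_eq_of_pos hdpos).symm⟩
    simp only [Nat.add_sub_cancel, pow_succ, Function.comp]
    have hxne : x ≠ 0 := hx.ne'
    have hpne : P.eval x ≠ 0 := hp.ne'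
    field_simp
    ring
  have hFconst : ∀ x : ℝ, 0 < x → F x = F 1 := fun x hx => eq_of_deriv_zero F hF hx one_pos
  have hBQ : Filter.Tendsto (fun t => LP (fun u => Q.eval u) t) Filter.atTop (nhds B) := by
    apply hB.congr'
    filter_upwards [Filter.eventually_gt_atTop (0 : ℝ)] with t ht
    unfold LP
    congr 1
    · apply intervalIntegral.integral_congr
      intro u hu
      rw [Set.uIcc_of_le ht.le] at hu
      rcases eq_or_lt_of_le hu.1 with h | h
      · rw [← h]; simp
      · show Real.log (u ^ d * P.eval u⁻¹) / u = Real.log (Q.eval u) / u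
        rw [hQeval u h.ne']
    · show 1 / 2 * Real.log t * Real.log (t ^ d * P.eval t⁻¹)
          = 1 / 2 * Real.log t * Real.log (Q.eval t)
      rw [hQeval t ht.ne']
  have hzP := tendsto_LP_zero hcoeff h0
  have hzQ := tendsto_LP_zero hQc hQ0
  have hAF : Filter.Tendsto F Filter.atTop (nhds (A + 0)) :=
    hA.add (hzQ.comp tendsto_inv_atTop_nhdsGT_zero)
  have hFc : Filter.Tendsto F Filter.atTop (nhds (F 1)) := by
    apply Filter.Tendsto.congr' _ (tendsto_const_nhds : Filter.Tendsto (fun _ : ℝ => F 1) Filter.atTop (nhds (F 1)))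
    filter_upwards [Filter.eventually_gt_atTop (0 : ℝ)] with t ht
    exact (hFconst t ht).symm
  have hAc : A + 0 = F 1 := tendsto_nhds_unique hAF hFc
  have hGF : Filter.Tendsto (fun x : ℝ => F x⁻¹) Filter.atTop (nhds (B + 0)) := by
    have h1 : Filter.Tendsto (fun x : ℝ => LP (fun u => Q.eval u) x + LP (fun u => P.eval u) x⁻¹)
        Filter.atTop (nhds (B + 0)) := hBQ.add (hzP.comp tendsto_inv_atTop_nhdsGT_zero)
    apply h1.congr'
    filter_upwards [Filter.eventually_gt_atTop (0 : ℝ)] with x hx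
    rw [hFdef]
    simp only [inv_inv]
    ring
  have hGc : Filter.Tendsto (fun x : ℝ => F x⁻¹) Filter.atTop (nhds (F 1)) := by
    apply Filter.Tendsto.congr' _ (tendsto_const_nhds : Filter.Tendsto (fun _ : ℝ => F 1) Filter.atTop (nhds (F 1)))
    filter_upwards [Filter.eventually_gt_atTop (0 : ℝ)] with t ht
    exact (hFconst t⁻¹ (inv_pos.2 ht)).symm
  have hBc : B + 0 = F 1 := tendsto_nhds_unique hGF hGc
  rw [← add_zero A, ← add_zero B, hAc, hBc]
end

section
/- Let C be the multiplicative abelian group of differentiable functions ℝ_{>0} → ℝ_{>0}, and let y₁,…,y_M, p₁,…,p_M ∈ C and rational numbers c₁,…,c_M be such that ∑ₗ cₗ·(yₗ ∧ pₗ) = 0 in the rational wedge space ⋀²C. Then for all z > 0, ∑ₗ cₗ·(d/dz log yₗ(z))·log pₗ(z) = ∑ₗ cₗ·log yₗ(z)·(d/dz log pₗ(z)). -/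
open TensorProduct

noncomputable section

/-- The multiplicative abelian group of differentiable functions `ℝ_{>0} → ℝ_{>0}`,
realized as the subgroup of `ℝ → ℝˣ` of functions which are differentiable and positive
on `(0, ∞)`. -/
def Cgrp : Subgroup (ℝ → ℝˣ) where
  carrier := {f | DifferentiableOn ℝ (fun x => ((f x : ℝ))) (Set.Ioi 0) ∧
    ∀ x ∈ Set.Ioi (0:ℝ), (0:ℝ) < (f x : ℝ)}
  mul_mem' := by
    rintro f g ⟨hf, hfpos⟩ ⟨hg, hgpos⟩
    exact ⟨hf.mul hg, fun x hx => mul_pos (hfpos x hx) (hgpos x hx)⟩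
  one_mem' := ⟨differentiableOn_const 1, fun x _ => one_pos⟩
  inv_mem' := by
    rintro f ⟨hf, hfpos⟩
    constructor
    · have h : (fun x => (((f⁻¹) x : ℝˣ) : ℝ)) = fun x => ((f x : ℝ))⁻¹ := by
        funext x; simp
      rw [h]
      exact hf.inv (fun x hx => ne_of_gt (hfpos x hx))
    · intro x hx
      simpa using inv_pos.mpr (hfpos x hx)

/-- `Additive` version of `Cgrp`, a `ℤ`-module. -/
abbrev Agrp := Additive Cgrp

/-- The rationalized tensor square `ℚ ⊗_ℤ (C ⊗_ℤ C)`. -/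
abbrev Vsp := ℚ ⊗[ℤ] (Agrp ⊗[ℤ] Agrp)

/-- The subspace generated by the symmetric elements `f ⊗ f`. -/
def S2 : Submodule ℚ Vsp :=
  Submodule.span ℚ {v | ∃ f : Cgrp, v = (1:ℚ) ⊗ₜ[ℤ] (Additive.ofMul f ⊗ₜ[ℤ] Additive.ofMul f)}

/-- The wedge space `⋀² C`. -/
abbrev Wedge := Vsp ⧸ S2

/-- The wedge product `f ∧ g` in `⋀² C`. -/
def wedge (f g : Cgrp) : Wedge :=
  Submodule.Quotient.mk ((1:ℚ) ⊗ₜ[ℤ] (Additive.ofMul f ⊗ₜ[ℤ] Additive.ofMul g))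

/-- Differentiability of `log ∘ f` at a positive point, for `f ∈ Cgrp`. -/
lemma Cgrp.diff_log (f : Cgrp) {z : ℝ} (hz : 0 < z) :
    DifferentiableAt ℝ (fun x => Real.log (((f : ℝ → ℝˣ) x : ℝ))) z := by
  have hd : DifferentiableAt ℝ (fun x => (((f : ℝ → ℝˣ) x : ℝ))) z :=
    f.2.1.differentiableAt (isOpen_Ioi.mem_nhds hz)
  exact hd.log (ne_of_gt (f.2.2 z hz))

/-- `f ↦ log f(z)` as an additive hom. -/
def Lhom (z : ℝ) : Agrp →+ ℝ where
  toFun f := Real.log ((((Additive.toMul f : Cgrp) : ℝ → ℝˣ) z : ℝ))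
  map_zero' := by simp
  map_add' f g := by
    have : ((((Additive.toMul (f + g) : Cgrp) : ℝ → ℝˣ) z : ℝ)) =
        (((Additive.toMul f : Cgrp) : ℝ → ℝˣ) z : ℝ) *
        (((Additive.toMul g : Cgrp) : ℝ → ℝˣ) z : ℝ) := rfl
    rw [this, Real.log_mul (Units.ne_zero _) (Units.ne_zero _)]

/-- `f ↦ (log f)'(z)` as an additive hom. -/
def Dhom (z : ℝ) (hz : 0 < z) : Agrp →+ ℝ where
  toFun f := deriv (fun x => Real.log ((((Additive.toMul f : Cgrp) : ℝ → ℝˣ) x : ℝ))) z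
  map_zero' := by simp
  map_add' f g := by
    have e : (fun x => Real.log ((((Additive.toMul (f + g) : Cgrp) : ℝ → ℝˣ) x : ℝ))) =
        fun x => Real.log ((((Additive.toMul f : Cgrp) : ℝ → ℝˣ) x : ℝ)) +
          Real.log ((((Additive.toMul g : Cgrp) : ℝ → ℝˣ) x : ℝ)) := by
      funext x
      have : ((((Additive.toMul (f + g) : Cgrp) : ℝ → ℝˣ) x : ℝ)) =
          (((Additive.toMul f : Cgrp) : ℝ → ℝˣ) x : ℝ) *
          (((Additive.toMul g : Cgrp) : ℝ → ℝˣ) x : ℝ) := rfl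
      rw [this, Real.log_mul (Units.ne_zero _) (Units.ne_zero _)]
    rw [e]
    exact deriv_add (Cgrp.diff_log (Additive.toMul f) hz)
      (Cgrp.diff_log (Additive.toMul g) hz)

/-- The antisymmetric bilinear form `(f, g) ↦ (log f)'(z)·log g(z) - log f(z)·(log g)'(z)`. -/
def Bmap (z : ℝ) (hz : 0 < z) : Agrp →ₗ[ℤ] Agrp →ₗ[ℤ] ℝ :=
  LinearMap.mk₂ ℤ
    (fun f g => (Dhom z hz) f * (Lhom z) g - (Lhom z) f * (Dhom z hz) g)
    (fun a a' b => by simp only [map_add]; ring)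
    (fun n a b => by
      simp only [map_zsmul, zsmul_eq_mul]; ring)
    (fun a b b' => by simp only [map_add]; ring)
    (fun n a b => by
      simp only [map_zsmul, zsmul_eq_mul]; ring)

/-- The induced `ℚ`-linear functional on `Vsp`. -/
def Phi (z : ℝ) (hz : 0 < z) : Vsp →ₗ[ℚ] ℝ :=
  (TensorProduct.lift (Bmap z hz)).liftBaseChange ℚ

lemma Phi_ker (z : ℝ) (hz : 0 < z) : S2 ≤ LinearMap.ker (Phi z hz) := by
  rw [S2, Submodule.span_le]
  rintro v ⟨f, rfl⟩
  show Phi z hz _ = 0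
  erw [LinearMap.liftBaseChange_tmul]
  simp only [SetLike.mem_coe, LinearMap.mem_ker, Phi, LinearMap.liftBaseChange_tmul,
    TensorProduct.lift.tmul, Bmap, LinearMap.mk₂_apply, one_smul]
  ring

/-- If `∑ cₗ (yₗ ∧ pₗ) = 0` in `⋀² C`, then
`∑ cₗ (log yₗ)'(z)·log pₗ(z) = ∑ cₗ log yₗ(z)·(log pₗ)'(z)` for all `z > 0`. -/
theorem symmetry_from_wedge (M : ℕ) (y p : Fin M → Cgrp) (c : Fin M → ℚ)
    (h : ∑ l, c l • wedge (y l) (p l) = 0) :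
    ∀ z : ℝ, 0 < z →
      ∑ l, (c l : ℝ) * deriv (fun x => Real.log (((y l : ℝ → ℝˣ) x : ℝ))) z *
          Real.log (((p l : ℝ → ℝˣ) z : ℝ)) =
      ∑ l, (c l : ℝ) * Real.log (((y l : ℝ → ℝˣ) z : ℝ)) *
          deriv (fun x => Real.log (((p l : ℝ → ℝˣ) x : ℝ))) z := by
  intro z hz
  set Ψ : Wedge →ₗ[ℚ] ℝ := S2.liftQ (Phi z hz) (Phi_ker z hz) with hΨ
  have hw : ∀ f g : Cgrp, Ψ (wedge f g) =
      (Dhom z hz) (Additive.ofMul f) * (Lhom z) (Additive.ofMul g) -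
        (Lhom z) (Additive.ofMul f) * (Dhom z hz) (Additive.ofMul g) := by
    intro f g
    show Phi z hz ((1:ℚ) ⊗ₜ[ℤ] (Additive.ofMul f ⊗ₜ[ℤ] Additive.ofMul g)) = _
    erw [LinearMap.liftBaseChange_tmul]
    simp only [hΨ, wedge, Submodule.liftQ_apply, Phi, LinearMap.liftBaseChange_tmul,
      TensorProduct.lift.tmul, Bmap, LinearMap.mk₂_apply, one_smul]
  have h0 : Ψ (∑ l, c l • wedge (y l) (p l)) = 0 := by rw [h, map_zero]
  rw [map_sum] at h0
  simp only [map_smul, hw] at h0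
  rw [← sub_eq_zero, ← Finset.sum_sub_distrib]
  rw [← h0]
  apply Finset.sum_congr rfl
  intro l _
  rw [Rat.smul_def]
  simp only [Dhom, Lhom, AddMonoidHom.coe_mk, ZeroHom.coe_mk, toMul_ofMul]
  ring
end
end

section
/- Let P(y) = 1 + ∑_{s=1}^{d-1} z_s·y^s + y^d with fixed non-negative coefficients z_s, except that z_{s₀} = p(z) is a differentiable function of a real parameter z with p(z) ≥ 0. Let y: ℝ_{>0} → ℝ_{>0} be differentiable. Then d/dz [ L̃_{P}(y(z)) ] = p'(z)·∫₀^{y(z)} u^{s₀-1}/P(u) du + (1/2)·[ (d/dz log y(z))·log P(y(z)) - log(y(z))·(d/dz log P(y(z))) ]. -/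
open MeasureTheory intervalIntegral Metric Asymptotics

lemma rogersAux_abs_log_sub_le {a b : ℝ} (ha : 1 ≤ a) (hb : 1 ≤ b) :
    |Real.log a - Real.log b| ≤ |a - b| := by
  wlog h : b ≤ a generalizing a b
  · rw [abs_sub_comm, abs_sub_comm a b]; exact this hb ha (le_of_not_ge h)
  have ha0 : (0:ℝ) < a := lt_of_lt_of_le one_pos ha
  have hb0 : (0:ℝ) < b := lt_of_lt_of_le one_pos hb
  rw [abs_of_nonneg (sub_nonneg.mpr (Real.log_le_log hb0 h)),
    abs_of_nonneg (sub_nonneg.mpr h), ← Real.log_div ha0.ne' hb0.ne']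
  have h2 : Real.log (a/b) ≤ a/b - 1 := Real.log_le_sub_one_of_pos (by positivity)
  have h3 : a/b - 1 ≤ a - b := by
    have : a/b - 1 = (a - b)/b := by field_simp
    rw [this]
    exact div_le_self (sub_nonneg.mpr h) hb
  linarith

lemma rogersAux_intInt {f : ℝ → ℝ} {x M : ℝ} (hx : 0 ≤ x)
    (hm : AEStronglyMeasurable f (volume.restrict (Set.Ioc 0 x)))
    (hb : ∀ u ∈ Set.Ioc (0:ℝ) x, ‖f u‖ ≤ M) :
    IntervalIntegrable f volume 0 x := by
  rw [intervalIntegrable_iff_integrableOn_Ioc_of_le hx]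
  exact Integrable.mono' (integrableOn_const measure_Ioc_lt_top.ne)
    hm (ae_restrict_of_forall_mem measurableSet_Ioc hb)

/-- Derivative of the higher-degree Rogers dilogarithm `L̃_{P}(y(z))` in a single varying
coefficient `z_{s₀} = p(z)` of `P`. -/
theorem deriv_rogers_higher (d s₀ : ℕ) (hd : 2 ≤ d) (hs : 1 ≤ s₀) (hs' : s₀ ≤ d - 1)
    (zc : ℕ → ℝ) (hzc : ∀ t, 0 ≤ zc t)
    (p : ℝ → ℝ) (hp : Differentiable ℝ p) (hp0 : ∀ z, 0 ≤ p z)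
    (y : ℝ → ℝ) (hypos : ∀ z, 0 < z → 0 < y z)
    (hy : DifferentiableOn ℝ y (Set.Ioi 0))
    (P : ℝ → ℝ → ℝ)
    (hP : ∀ z u, P z u = 1 + (∑ s ∈ Finset.Ico 1 d, (if s = s₀ then p z else zc s) * u ^ s)
      + u ^ d)
    (z : ℝ) (hz : 0 < z) :
    deriv (fun w => (∫ u in (0:ℝ)..(y w), Real.log (P w u) / u)
        - (1/2) * Real.log (y w) * Real.log (P w (y w))) z
      = deriv p z * (∫ u in (0:ℝ)..(y z), u ^ (s₀ - 1) / P z u)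
        + (1/2) * (deriv (fun w => Real.log (y w)) z * Real.log (P z (y z))
          - Real.log (y z) * deriv (fun w => Real.log (P w (y w))) z) := by
  have hx₀ : 0 < y z := hypos z hz
  set x₀ := y z with hx₀def
  have hs₀d : s₀ ∈ Finset.Ico 1 d := Finset.mem_Ico.mpr ⟨hs, by omega⟩
  -- key algebraic identity
  have key : ∀ w u, P w u = P z u + (p w - p z) * u ^ s₀ := by
    intro w u
    rw [hP, hP]
    have h2 : ∀ s ∈ Finset.Ico 1 d, (if s = s₀ then p w else zc s) * u ^ s
        = (if s = s₀ then p z else zc s) * u ^ s + (if s = s₀ then (p w - p z) * u ^ s₀ else 0) := by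
      intro s _
      by_cases h : s = s₀ <;> simp [h] <;> ring
    rw [Finset.sum_congr rfl h2, Finset.sum_add_distrib,
      Finset.sum_ite_eq' (Finset.Ico 1 d) s₀ (fun _ => (p w - p z) * u ^ s₀), if_pos hs₀d]
    ring
  have hPone : ∀ w u, 0 ≤ u → 1 ≤ P w u := by
    intro w u hu
    rw [hP]
    have h1 : 0 ≤ ∑ s ∈ Finset.Ico 1 d, (if s = s₀ then p w else zc s) * u ^ s :=
      Finset.sum_nonneg fun s _ => mul_nonneg
        (by by_cases h : s = s₀ <;> simp [h, hp0, hzc]) (pow_nonneg hu s)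
    nlinarith [pow_nonneg hu d]
  have hPpos : ∀ w u, 0 ≤ u → 0 < P w u := fun w u hu =>
    lt_of_lt_of_le one_pos (hPone w u hu)
  have hPcont : ∀ w, Continuous (P w) := by
    intro w
    have hfe : P w = fun u => 1 + (∑ s ∈ Finset.Ico 1 d, (if s = s₀ then p w else zc s) * u ^ s)
        + u ^ d := funext fun u => hP w u
    rw [hfe]; fun_prop
  have hfm : ∀ w, Measurable (fun u => Real.log (P w u) / u) := fun w =>
    (Real.measurable_log.comp (hPcont w).measurable).div measurable_id
  -- integrability near 0
  have hIoc : ∀ w x, 0 < x → IntervalIntegrable (fun u => Real.log (P w u) / u) volume 0 x := by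
    intro w x hx
    set M := ((∑ s ∈ Finset.Ico 1 d, (if s = s₀ then p w else zc s)) + 1) * max 1 x ^ d with hM
    apply rogersAux_intInt hx.le (hfm w).aestronglyMeasurable (M := M)
    rintro u ⟨hu0, hux⟩
    have hlog0 : 0 ≤ Real.log (P w u) := Real.log_nonneg (hPone w u hu0.le)
    have hub : ∀ s, 1 ≤ s → s ≤ d → u ^ s ≤ max 1 x ^ d * u := by
      intro s hs1 hsd
      calc u ^ s = u ^ (s-1) * u := by rw [← pow_succ]; congr 1; omega
      _ ≤ max 1 x ^ d * u := by
          apply mul_le_mul_of_nonneg_right _ hu0.le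
          calc u ^ (s-1) ≤ max 1 x ^ (s-1) :=
                pow_le_pow_left₀ hu0.le (le_trans hux (le_max_right 1 x)) _
          _ ≤ max 1 x ^ d := pow_le_pow_right₀ (le_max_left 1 x) (by omega)
    have hsum : ∑ s ∈ Finset.Ico 1 d, (if s = s₀ then p w else zc s) * u ^ s
        ≤ (∑ s ∈ Finset.Ico 1 d, (if s = s₀ then p w else zc s)) * (max 1 x ^ d * u) := by
      rw [Finset.sum_mul]
      apply Finset.sum_le_sum
      intro s hsmem
      obtain ⟨h1, h2⟩ := Finset.mem_Ico.mp hsmem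
      exact mul_le_mul_of_nonneg_left (hub s h1 (le_of_lt h2))
        (by by_cases h : s = s₀ <;> simp [h, hp0, hzc])
    have hd' : u ^ d ≤ max 1 x ^ d * u := hub d (by omega) le_rfl
    have hP1 : P w u - 1 ≤ M * u := by
      rw [hP, hM]; nlinarith [hsum, hd']
    have hlogle : Real.log (P w u) ≤ M * u :=
      le_trans (Real.log_le_sub_one_of_pos (hPpos w u hu0.le)) hP1
    rw [Real.norm_eq_abs, abs_of_nonneg (div_nonneg hlog0 hu0.le), div_le_iff₀ hu0]
    exact hlogle
  -- continuity of the integrand on Ioi 0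
  have hfc : ∀ w, ContinuousOn (fun u => Real.log (P w u) / u) (Set.Ioi 0) := by
    intro w
    exact ContinuousOn.div (ContinuousOn.log (hPcont w).continuousOn
      (fun u hu => (hPpos w u (le_of_lt hu)).ne')) continuousOn_id (fun u hu => ne_of_gt hu)
  have hyd : DifferentiableAt ℝ y z := hy.differentiableAt (Ioi_mem_nhds hz)
  have hyd' : HasDerivAt y (deriv y z) z := hyd.hasDerivAt
  set y' := deriv y z with hy'def
  -- A part : FTC
  have hA : HasDerivAt (fun w => ∫ u in (0:ℝ)..(y w), Real.log (P z u) / u)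
      ((Real.log (P z x₀) / x₀) * y') z := by
    have h1 : HasDerivAt (fun x => ∫ u in (0:ℝ)..x, Real.log (P z u) / u)
        (Real.log (P z x₀) / x₀) x₀ :=
      intervalIntegral.integral_hasDerivAt_right (hIoc z x₀ hx₀)
        (ContinuousOn.stronglyMeasurableAtFilter isOpen_Ioi (hfc z) x₀ hx₀)
        ((hfc z).continuousAt (Ioi_mem_nhds hx₀))
    exact h1.comp z hyd'
  -- C part : differentiation under the integral sign
  have hΨ : HasDerivAt (fun a => ∫ u in (0:ℝ)..x₀, Real.log (P z u + a * u ^ s₀) / u)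
      (∫ u in (0:ℝ)..x₀, (P z u + 0 * u ^ s₀)⁻¹ * u ^ s₀ / u) 0 := by
    set K : ℝ := max 1 x₀ ^ s₀ with hK
    have hK1 : (1:ℝ) ≤ K := one_le_pow₀ (le_max_left 1 x₀)
    have hε : (0:ℝ) < 1/(2*K) := by positivity
    have hIi : Set.uIoc (0:ℝ) x₀ = Set.Ioc 0 x₀ := Set.uIoc_of_le hx₀.le
    have huK : ∀ u ∈ Set.Ioc (0:ℝ) x₀, u ^ s₀ ≤ K := by
      intro u hu
      exact pow_le_pow_left₀ hu.1.le (le_trans hu.2 (le_max_right 1 x₀)) s₀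
    have hden : ∀ a ∈ ball (0:ℝ) (1/(2*K)), ∀ u ∈ Set.Ioc (0:ℝ) x₀,
        1/2 ≤ P z u + a * u ^ s₀ := by
      intro a ha u hu
      rw [mem_ball, dist_zero_right, Real.norm_eq_abs] at ha
      have h1 : |a * u ^ s₀| ≤ (1/(2*K)) * K := by
        rw [abs_mul, abs_of_nonneg (pow_nonneg hu.1.le s₀)]
        exact mul_le_mul ha.le (huK u hu) (pow_nonneg hu.1.le s₀) hε.le
      have h2 : (1/(2*K)) * K = 1/2 := by field_simp
      have h3 := hPone z u hu.1.le
      have h4 := abs_le.mp h1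
      nlinarith [h4.1, h4.2]
    have hmain := (intervalIntegral.hasDerivAt_integral_of_dominated_loc_of_deriv_le
      (F := fun a u => Real.log (P z u + a * u ^ s₀) / u)
      (F' := fun a u => (P z u + a * u ^ s₀)⁻¹ * u ^ s₀ / u)
      (bound := fun _ => 2 * K) (μ := volume) (a := (0:ℝ)) (b := x₀) (x₀ := (0:ℝ)) (ball_mem_nhds (0:ℝ) hε)
      ?_ ?_ ?_ ?_ ?_ ?_).2
    · exact hmain
    · refine Filter.Eventually.of_forall (fun a => Measurable.aestronglyMeasurable ?_)
      exact (Real.measurable_log.comp ((hPcont z).measurable.add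
        ((measurable_id.pow_const s₀).const_mul a))).div measurable_id
    · simpa using hIoc z x₀ hx₀
    · refine Measurable.aestronglyMeasurable ?_
      exact ((((hPcont z).measurable.add
        ((measurable_id.pow_const s₀).const_mul 0)).inv).mul
        (measurable_id.pow_const s₀)).div measurable_id
    · refine Filter.Eventually.of_forall (fun u hu a ha => ?_)
      rw [hIi] at hu
      have hu0 : 0 < u := hu.1
      have hden' := hden a ha u hu
      have hpos : (0:ℝ) < P z u + a * u ^ s₀ := by linarith
      have hval : (P z u + a * u ^ s₀)⁻¹ * u ^ s₀ / u ≤ 2 * K := by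
        have h1 : (P z u + a * u ^ s₀)⁻¹ ≤ 2 := by
          rw [inv_le_comm₀ (by linarith) (by norm_num)]
          linarith [hden']
        have h2 : u ^ s₀ / u ≤ K := by
          have he : u ^ s₀ / u = u ^ (s₀ - 1) := by
            rw [div_eq_iff hu0.ne', ← pow_succ]
            congr 1; omega
          rw [he]
          calc u ^ (s₀-1) ≤ max 1 x₀ ^ (s₀-1) :=
                pow_le_pow_left₀ hu0.le (le_trans hu.2 (le_max_right 1 x₀)) _
          _ ≤ K := pow_le_pow_right₀ (le_max_left 1 x₀) (by omega)
        calc (P z u + a * u ^ s₀)⁻¹ * u ^ s₀ / u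
            = (P z u + a * u ^ s₀)⁻¹ * (u ^ s₀ / u) := by ring
          _ ≤ 2 * K := mul_le_mul h1 h2 (by positivity) (by norm_num)
      rw [Real.norm_eq_abs, abs_of_nonneg (by positivity)]
      exact hval
    · exact intervalIntegrable_const
    · refine Filter.Eventually.of_forall (fun u hu a ha => ?_)
      rw [hIi] at hu
      have hpos : (0:ℝ) < P z u + a * u ^ s₀ := by linarith [hden a ha u hu]
      have h0 : HasDerivAt (fun a : ℝ => P z u + a * u ^ s₀) (u ^ s₀) a :=
        (hasDerivAt_mul_const (u ^ s₀)).const_add (P z u)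
      have := ((Real.hasDerivAt_log hpos.ne').comp a h0).div_const u
      simpa [Function.comp] using this
  have hint_eq : (∫ u in (0:ℝ)..x₀, (P z u + 0 * u ^ s₀)⁻¹ * u ^ s₀ / u)
      = ∫ u in (0:ℝ)..x₀, u ^ (s₀ - 1) / P z u := by
    apply intervalIntegral.integral_congr_ae
    filter_upwards with u hu
    rw [Set.uIoc_of_le hx₀.le] at hu
    have hu0 : 0 < u := hu.1
    have hP0 : 0 < P z u := hPpos z u hu0.le
    rw [zero_mul, add_zero, show u ^ s₀ = u ^ (s₀-1) * u from by rw [← pow_succ]; congr 1; omega]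
    field_simp
  have hC : HasDerivAt (fun w => ∫ u in (0:ℝ)..x₀, Real.log (P w u) / u)
      (deriv p z * ∫ u in (0:ℝ)..x₀, u ^ (s₀ - 1) / P z u) z := by
    have hpz : HasDerivAt (fun w => p w - p z) (deriv p z) z := (hp z).hasDerivAt.sub_const _
    have hΨ' : HasDerivAt (fun a => ∫ u in (0:ℝ)..x₀, Real.log (P z u + a * u ^ s₀) / u)
        (∫ u in (0:ℝ)..x₀, (P z u + 0 * u ^ s₀)⁻¹ * u ^ s₀ / u) (p z - p z) := by
      rw [sub_self]; exact hΨ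
    have hcomp := HasDerivAt.comp z hΨ' hpz
    have hfe : ((fun a => ∫ u in (0:ℝ)..x₀, Real.log (P z u + a * u ^ s₀) / u)
        ∘ fun w => p w - p z) = fun w => ∫ u in (0:ℝ)..x₀, Real.log (P w u) / u := by
      funext w
      simp only [Function.comp]
      apply intervalIntegral.integral_congr
      intro u _
      show Real.log (P z u + (p w - p z) * u ^ s₀) / u = Real.log (P w u) / u
      rw [key w u]
    rw [hfe, hint_eq] at hcomp
    rw [mul_comm]
    exact hcomp
  -- B₂ part : little-o remainder
  have hB₂' : HasDerivAt (fun w => (∫ u in x₀..(y w), Real.log (P w u) / u)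
      - ∫ u in x₀..(y w), Real.log (P z u) / u) 0 z := by
    set C₂ : ℝ := max 1 (x₀ + x₀/2) ^ s₀ with hC₂
    have hC₂1 : (1:ℝ) ≤ C₂ := one_le_pow₀ (le_max_left _ _)
    have hyc : ContinuousAt y z := hyd'.continuousAt
    have hev : ∀ᶠ w in nhds z, |y w - x₀| < x₀/2 := by
      have h2 : Set.Ioo (x₀ - x₀/2) (x₀ + x₀/2) ∈ nhds x₀ :=
        Ioo_mem_nhds (by linarith) (by linarith)
      filter_upwards [hyc.tendsto h2] with w hw
      rw [abs_lt]
      exact ⟨by linarith [hw.1], by linarith [hw.2]⟩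
    have hbig : (fun w => (∫ u in x₀..(y w), Real.log (P w u) / u)
        - ∫ u in x₀..(y w), Real.log (P z u) / u)
        =O[nhds z] fun w => (p w - p z) * (y w - x₀) := by
      apply IsBigO.of_bound C₂
      filter_upwards [hev] with w hw
      have hyw : x₀/2 < y w := by have := (abs_lt.mp hw).1; linarith
      have hmin : (0:ℝ) < min x₀ (y w) := lt_min hx₀ (by linarith)
      have hsub : Set.uIcc x₀ (y w) ⊆ Set.Ioi 0 := fun u hu =>
        lt_of_lt_of_le hmin (Set.mem_Icc.mp hu).1
      have i1 : IntervalIntegrable (fun u => Real.log (P w u) / u) volume x₀ (y w) :=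
        ((hfc w).mono hsub).intervalIntegrable
      have i2 : IntervalIntegrable (fun u => Real.log (P z u) / u) volume x₀ (y w) :=
        ((hfc z).mono hsub).intervalIntegrable
      rw [← intervalIntegral.integral_sub i1 i2]
      have hbnd : ∀ u ∈ Set.uIoc x₀ (y w),
          ‖Real.log (P w u) / u - Real.log (P z u) / u‖ ≤ C₂ * |p w - p z| := by
        intro u hu
        obtain ⟨hu1, hu2⟩ := hu
        have hu0 : 0 < u := lt_of_le_of_lt (le_min hx₀.le (by linarith)) hu1
        have humax : u ≤ x₀ + x₀/2 :=
          le_trans hu2 (max_le (by linarith) (by linarith [(abs_lt.mp hw).2]))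
        have h1 : Real.log (P w u) / u - Real.log (P z u) / u
            = (Real.log (P w u) - Real.log (P z u)) / u := (sub_div _ _ _).symm
        rw [h1, Real.norm_eq_abs, abs_div, abs_of_pos hu0, div_le_iff₀ hu0]
        have h2 : |Real.log (P w u) - Real.log (P z u)| ≤ |P w u - P z u| :=
          rogersAux_abs_log_sub_le (hPone w u hu0.le) (hPone z u hu0.le)
        have h3 : P w u - P z u = (p w - p z) * u ^ s₀ := by rw [key w u]; ring
        have h5 : u ^ s₀ ≤ C₂ * u := by
          calc u ^ s₀ = u ^ (s₀ - 1) * u := by rw [← pow_succ]; congr 1; omega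
          _ ≤ C₂ * u := by
              apply mul_le_mul_of_nonneg_right _ hu0.le
              calc u ^ (s₀-1) ≤ max 1 (x₀ + x₀/2) ^ (s₀-1) :=
                    pow_le_pow_left₀ hu0.le (le_trans humax (le_max_right _ _)) _
              _ ≤ C₂ := pow_le_pow_right₀ (le_max_left _ _) (by omega)
        have h4 : |P w u - P z u| ≤ C₂ * |p w - p z| * u := by
          rw [h3, abs_mul, abs_of_nonneg (pow_nonneg hu0.le _)]
          calc |p w - p z| * u ^ s₀ ≤ |p w - p z| * (C₂ * u) :=
                mul_le_mul_of_nonneg_left h5 (abs_nonneg _)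
          _ = C₂ * |p w - p z| * u := by ring
        exact le_trans h2 h4
      calc ‖∫ u in x₀..(y w), (Real.log (P w u) / u - Real.log (P z u) / u)‖
          ≤ C₂ * |p w - p z| * |y w - x₀| :=
            intervalIntegral.norm_integral_le_of_norm_le_const hbnd
        _ = C₂ * ‖(p w - p z) * (y w - x₀)‖ := by
            rw [Real.norm_eq_abs, abs_mul]; ring
    have h1 : (fun w => p w - p z) =o[nhds z] (fun _ => (1:ℝ)) := by
      rw [isLittleO_one_iff]
      have : Filter.Tendsto (fun w => p w - p z) (nhds z) (nhds (p z - p z)) :=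
        (hp z).continuousAt.tendsto.sub tendsto_const_nhds
      simpa using this
    have h2 : (fun w => y w - x₀) =O[nhds z] fun w => w - z := hyd'.isBigO_sub
    have final := hbig.trans_isLittleO (by simpa using h1.mul_isBigO h2)
    rw [hasDerivAt_iff_isLittleO]
    simpa [intervalIntegral.integral_same] using final
  -- decomposition (eventually)
  have hdecomp : (fun w => ∫ u in (0:ℝ)..(y w), Real.log (P w u) / u) =ᶠ[nhds z]
      fun w => (((∫ u in (0:ℝ)..(y w), Real.log (P z u) / u)
        + ∫ u in (0:ℝ)..x₀, Real.log (P w u) / u)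
        + ((∫ u in x₀..(y w), Real.log (P w u) / u)
          - ∫ u in x₀..(y w), Real.log (P z u) / u))
        - ∫ u in (0:ℝ)..x₀, Real.log (P z u) / u := by
    filter_upwards [Ioi_mem_nhds hz] with w hw
    have hyw : 0 < y w := hypos w hw
    have hsub : Set.uIcc x₀ (y w) ⊆ Set.Ioi 0 := fun u hu =>
      lt_of_lt_of_le (lt_min hx₀ hyw) (Set.mem_Icc.mp hu).1
    have i1 : IntervalIntegrable (fun u => Real.log (P w u) / u) volume 0 x₀ := hIoc w x₀ hx₀
    have i2 : IntervalIntegrable (fun u => Real.log (P w u) / u) volume x₀ (y w) :=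
      ((hfc w).mono hsub).intervalIntegrable
    have i3 : IntervalIntegrable (fun u => Real.log (P z u) / u) volume 0 x₀ := hIoc z x₀ hx₀
    have i4 : IntervalIntegrable (fun u => Real.log (P z u) / u) volume x₀ (y w) :=
      ((hfc z).mono hsub).intervalIntegrable
    have e1 := intervalIntegral.integral_add_adjacent_intervals i1 i2
    have e2 := intervalIntegral.integral_add_adjacent_intervals i3 i4
    rw [← e1, ← e2]
    ring
  have hG : HasDerivAt (fun w => ∫ u in (0:ℝ)..(y w), Real.log (P w u) / u)
      (((Real.log (P z x₀) / x₀) * y'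
        + deriv p z * ∫ u in (0:ℝ)..x₀, u ^ (s₀ - 1) / P z u) + 0) z :=
    HasDerivAt.congr_of_eventuallyEq (((hA.add hC).add hB₂').sub_const
      (∫ u in (0:ℝ)..x₀, Real.log (P z u) / u)) hdecomp
  -- second part
  have hylog : HasDerivAt (fun w => Real.log (y w)) (x₀⁻¹ * y') z :=
    (Real.hasDerivAt_log hx₀.ne').comp z hyd'
  have hPyd : DifferentiableAt ℝ (fun w => P w (y w)) z := by
    have hfe : (fun w => P w (y w)) = fun w => 1 + (∑ s ∈ Finset.Ico 1 d,
        (if s = s₀ then p w else zc s) * (y w) ^ s) + (y w) ^ d := funext fun w => hP w (y w)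
    rw [hfe]
    apply DifferentiableAt.add _ (hyd.pow d)
    apply DifferentiableAt.add (differentiableAt_const 1)
    apply DifferentiableAt.fun_sum
    intro s _
    by_cases h : s = s₀
    · subst h
      simp only [if_pos rfl]
      exact (hp z).mul (hyd.pow s)
    · simp only [if_neg h]
      exact (differentiableAt_const _).mul (hyd.pow s)
  have hLP : DifferentiableAt ℝ (fun w => Real.log (P w (y w))) z :=
    (Real.differentiableAt_log (hPpos z x₀ hx₀.le).ne').comp (g := Real.log) z hPyd
  have hLPd : HasDerivAt (fun w => Real.log (P w (y w)))
      (deriv (fun w => Real.log (P w (y w))) z) z := hLP.hasDerivAt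
  have hF₂ : HasDerivAt (fun w => 1/2 * Real.log (y w) * Real.log (P w (y w)))
      ((1/2 * (x₀⁻¹ * y')) * Real.log (P z (y z))
        + (1/2 * Real.log (y z)) * deriv (fun w => Real.log (P w (y w))) z) z :=
    (hylog.const_mul (1/2 : ℝ)).mul hLPd
  have htot := hG.fun_sub hF₂
  rw [htot.deriv, hylog.deriv]
  rw [← hx₀def]
  ring
end
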